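/- arXiv:2412.03366 — 2 statements merged into one kernel-verified Lean document; each statement's English description precedes it below -/
import Mathlib

section
/- Fix α ∈ [0,1] and H ∈ (0,1), and set H⁺ = (1+α)H and H⁻ = (1−α)H. Define φ(ξ₁,ξ₂) = min(|ξ₁|,|ξ₂|)^{H⁻+1/2} · max(|ξ₁|,|ξ₂|)^{H⁺+1/2}. Then for any fixed (x₁,x₂) ∈ ℝ², the kernel K(ξ₁,ξ₂) = (e^{i x₁ ξ₁} − 1)(e^{i x₂ ξ₂} − 1)/φ(ξ₁,ξ₂) belongs to L²(ℝ²). -/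
open MeasureTheory Real

/-- `‖e^{it} - 1‖² = 2 - 2 cos t ≤ min 4 t²`. -/
lemma norm_exp_I_mul_sub_one_sq (t : ℝ) :
    ‖Complex.exp (Complex.I * t) - 1‖ ^ 2 ≤ min 4 (t ^ 2) := by
  have h1 : ‖Complex.exp (Complex.I * t) - 1‖ ^ 2 = 2 - 2 * Real.cos t := by
    rw [mul_comm, Complex.sq_norm, Complex.normSq_apply]
    simp only [Complex.sub_re, Complex.sub_im, Complex.one_re, Complex.one_im,
      Complex.exp_ofReal_mul_I_re, Complex.exp_ofReal_mul_I_im]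
    nlinarith [Real.sin_sq_add_cos_sq t]
  rw [h1]
  refine le_min (by nlinarith [Real.neg_one_le_cos t]) ?_
  have h2 : Real.cos t = Real.cos (2 * (t / 2)) := by ring_nf
  rw [h2, Real.cos_two_mul']
  nlinarith [Real.sin_sq_le_sq (x := t / 2), Real.sin_sq_add_cos_sq (t / 2)]

/-- The one-dimensional dominating function is integrable. -/
lemma g_integrable (c H : ℝ) (hH0 : 0 < H) (hH1 : H < 1) :
    Integrable (fun ξ : ℝ => min 4 (c ^ 2 * ξ ^ 2) * |ξ| ^ (-(2 * H + 1))) := by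
  set g : ℝ → ℝ := fun ξ => min 4 (c ^ 2 * ξ ^ 2) * |ξ| ^ (-(2 * H + 1)) with hg_def
  have hg_meas : Measurable g := by
    apply Measurable.mul
    · exact measurable_const.min ((measurable_id.pow_const 2).const_mul _)
    · exact measurable_abs.pow_const _
  have hg_nonneg : ∀ ξ, 0 ≤ g ξ := fun ξ =>
    mul_nonneg (le_min (by norm_num) (by positivity)) (Real.rpow_nonneg (abs_nonneg _) _)
  have hIoc : IntegrableOn g (Set.Ioc 0 1) := by
    have hb : IntegrableOn (fun ξ : ℝ => c ^ 2 * ξ ^ (1 - 2 * H)) (Set.Ioc 0 1) :=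
      ((intervalIntegral.intervalIntegrable_rpow' (a := 0) (b := 1) (by linarith)).1).const_mul (c ^ 2)
    refine Integrable.mono' hb (hg_meas.aestronglyMeasurable.restrict) ?_
    rw [ae_restrict_iff' measurableSet_Ioc]
    refine ae_of_all _ fun ξ hξ => ?_
    obtain ⟨h0, _⟩ := hξ
    rw [Real.norm_eq_abs, abs_of_nonneg (hg_nonneg ξ)]
    have habs : |ξ| = ξ := abs_of_pos h0
    calc min 4 (c ^ 2 * ξ ^ 2) * |ξ| ^ (-(2 * H + 1))
        ≤ (c ^ 2 * ξ ^ 2) * ξ ^ (-(2 * H + 1)) := by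
          rw [habs]
          exact mul_le_mul_of_nonneg_right (min_le_right _ _)
            (Real.rpow_nonneg h0.le _)
      _ = c ^ 2 * ξ ^ (1 - 2 * H) := by
          rw [mul_assoc]
          congr 1
          rw [← Real.rpow_natCast ξ 2, ← Real.rpow_add h0]
          congr 1
          push_cast
          ring
  have hIoi : IntegrableOn g (Set.Ioi 1) := by
    have hb : IntegrableOn (fun ξ : ℝ => 4 * ξ ^ (-(2 * H + 1))) (Set.Ioi 1) :=
      (integrableOn_Ioi_rpow_of_lt (by linarith) zero_lt_one).const_mul 4
    refine Integrable.mono' hb (hg_meas.aestronglyMeasurable.restrict) ?_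
    rw [ae_restrict_iff' measurableSet_Ioi]
    refine ae_of_all _ fun ξ hξ => ?_
    have h0 : (0 : ℝ) < ξ := lt_trans zero_lt_one hξ
    rw [Real.norm_eq_abs, abs_of_nonneg (hg_nonneg ξ)]
    rw [hg_def]
    simp only
    rw [abs_of_pos h0]
    exact mul_le_mul_of_nonneg_right (min_le_left _ _) (Real.rpow_nonneg h0.le _)
  have hpos : IntegrableOn g (Set.Ioi 0) := by
    rw [← Set.Ioc_union_Ioi_eq_Ioi (zero_le_one (α := ℝ))]
    exact hIoc.union hIoi
  have geven : ∀ x : ℝ, g (-x) = g x := fun x => by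
    simp [hg_def, neg_sq, abs_neg]
  have hneg : IntegrableOn g (Set.Iio 0) := by
    have h2 : Integrable ((Set.Ioi (0 : ℝ)).indicator g) :=
      (integrable_indicator_iff measurableSet_Ioi).2 hpos
    have h3 := h2.comp_neg
    have heq : (Set.Iio (0 : ℝ)).indicator g =
        fun x => (Set.Ioi (0 : ℝ)).indicator g (-x) := by
      funext x
      by_cases hx : x < 0
      · rw [Set.indicator_of_mem (Set.mem_Iio.2 hx),
          Set.indicator_of_mem (Set.mem_Ioi.2 (by linarith)), geven]
      · rw [Set.indicator_of_notMem (by simpa using hx),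
          Set.indicator_of_notMem (by simp; linarith [not_lt.1 hx])]
    exact (integrable_indicator_iff measurableSet_Iio).1 (by rw [heq]; exact h3)
  have hsplit : g = fun x => (Set.Iio (0 : ℝ)).indicator g x +
      (Set.Ioi (0 : ℝ)).indicator g x := by
    funext x
    rcases lt_trichotomy x 0 with h | h | h
    · rw [Set.indicator_of_mem (Set.mem_Iio.2 h),
        Set.indicator_of_notMem (by simp; linarith)]
      ring
    · subst h
      have : g 0 = 0 := by
        simp [hg_def, Real.zero_rpow (show -(2 * H + 1) ≠ 0 by intro hc; nlinarith)]
      simp [this]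
    · rw [Set.indicator_of_notMem (by simp; linarith),
        Set.indicator_of_mem (Set.mem_Ioi.2 h)]
      ring
  rw [hsplit]
  exact ((integrable_indicator_iff measurableSet_Iio).2 hneg).add
    ((integrable_indicator_iff measurableSet_Ioi).2 hpos)

theorem kernel_memL2 (α H : ℝ) (hα : α ∈ Set.Icc (0:ℝ) 1) (hH : H ∈ Set.Ioo (0:ℝ) 1)
    (x₁ x₂ : ℝ) :
    MemLp (fun ξ : ℝ × ℝ =>
        (Complex.exp (Complex.I * (x₁ * ξ.1)) - 1) * (Complex.exp (Complex.I * (x₂ * ξ.2)) - 1) /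
          ((min |ξ.1| |ξ.2| ^ ((1 - α) * H + 1 / 2) *
            max |ξ.1| |ξ.2| ^ ((1 + α) * H + 1 / 2) : ℝ) : ℂ))
      2 (volume : Measure (ℝ × ℝ)) := by
  obtain ⟨hα0, hα1⟩ := hα
  obtain ⟨hH0, hH1⟩ := hH
  set a : ℝ := (1 - α) * H + 1 / 2 with ha_def
  set b : ℝ := (1 + α) * H + 1 / 2 with hb_def
  set p : ℝ := 2 * H + 1 with hp_def
  set f : ℝ × ℝ → ℂ := fun ξ =>
    (Complex.exp (Complex.I * (x₁ * ξ.1)) - 1) * (Complex.exp (Complex.I * (x₂ * ξ.2)) - 1) /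
      ((min |ξ.1| |ξ.2| ^ a * max |ξ.1| |ξ.2| ^ b : ℝ) : ℂ) with hf_def
  set g : ℝ → ℝ → ℝ := fun c ξ => min 4 (c ^ 2 * ξ ^ 2) * |ξ| ^ (-p) with hgdef
  have hg_nonneg : ∀ c ξ, 0 ≤ g c ξ := fun c ξ =>
    mul_nonneg (le_min (by norm_num) (by positivity)) (Real.rpow_nonneg (abs_nonneg _) _)
  -- measurability
  have hmeas : AEStronglyMeasurable f volume := by
    apply Measurable.aestronglyMeasurable
    apply Measurable.div
    · fun_prop
    · apply Complex.measurable_ofReal.comp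
      apply Measurable.mul
      · exact ((measurable_fst.abs.min measurable_snd.abs).pow_const a)
      · exact ((measurable_fst.abs.max measurable_snd.abs).pow_const b)
  -- pointwise bound
  have hbound : ∀ ξ : ℝ × ℝ, ‖f ξ‖ ^ 2 ≤ g x₁ ξ.1 * g x₂ ξ.2 := by
    intro ξ
    by_cases h1 : ξ.1 = 0
    · have : f ξ = 0 := by simp [hf_def, h1]
      rw [this]
      simpa using mul_nonneg (hg_nonneg x₁ ξ.1) (hg_nonneg x₂ ξ.2)
    by_cases h2 : ξ.2 = 0
    · have : f ξ = 0 := by simp [hf_def, h2]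
      rw [this]
      simpa using mul_nonneg (hg_nonneg x₁ ξ.1) (hg_nonneg x₂ ξ.2)
    set m : ℝ := min |ξ.1| |ξ.2| with hm_def
    set M : ℝ := max |ξ.1| |ξ.2| with hM_def
    have h0m : 0 < m := lt_min (abs_pos.2 h1) (abs_pos.2 h2)
    have hmM : m ≤ M := min_le_max
    have h0M : 0 < M := lt_of_lt_of_le h0m hmM
    have hφpos : 0 < m ^ a * M ^ b :=
      mul_pos (Real.rpow_pos_of_pos h0m a) (Real.rpow_pos_of_pos h0M b)
    -- norm computation
    have hnorm : ‖f ξ‖ ^ 2 =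
        (‖Complex.exp (Complex.I * (x₁ * ξ.1)) - 1‖ ^ 2 *
         ‖Complex.exp (Complex.I * (x₂ * ξ.2)) - 1‖ ^ 2) / (m ^ a * M ^ b) ^ 2 := by
      rw [hf_def]
      simp only
      rw [norm_div, Complex.norm_real, Real.norm_eq_abs, abs_of_pos hφpos,
        norm_mul, div_pow, mul_pow]
    rw [hnorm]
    -- denominator lower bound
    have hkey : m ^ p * M ^ p ≤ (m ^ a * M ^ b) ^ 2 := by
      have hsq : (m ^ a * M ^ b) ^ 2 = m ^ (2 * a) * M ^ (2 * b) := by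
        rw [mul_pow, ← Real.rpow_natCast (m ^ a) 2, ← Real.rpow_natCast (M ^ b) 2,
          ← Real.rpow_mul h0m.le, ← Real.rpow_mul h0M.le]
        push_cast
        ring_nf
      rw [hsq]
      have e1 : m ^ (2 * a) * M ^ (2 * b) = (m ^ (2 * a) * M ^ p) * M ^ (2 * b - p) := by
        rw [mul_assoc, ← Real.rpow_add h0M]
        ring_nf
      have e2 : m ^ p * M ^ p = (m ^ (2 * a) * M ^ p) * m ^ (2 * b - p) := by
        rw [mul_right_comm, ← Real.rpow_add h0m]
        congr 2
        rw [ha_def, hb_def, hp_def]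
        ring
      rw [e1, e2]
      refine mul_le_mul_of_nonneg_left ?_ (le_of_lt (mul_pos (Real.rpow_pos_of_pos h0m _)
        (Real.rpow_pos_of_pos h0M _)))
      exact Real.rpow_le_rpow h0m.le hmM (by simp only [hb_def, hp_def]; nlinarith)
    have hmMprod : m ^ p * M ^ p = |ξ.1| ^ p * |ξ.2| ^ p := by
      rw [← Real.mul_rpow h0m.le h0M.le, ← Real.mul_rpow (abs_nonneg _) (abs_nonneg _),
        hm_def, hM_def, min_mul_max]
    have hDpos : 0 < |ξ.1| ^ p * |ξ.2| ^ p := by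
      rw [← hmMprod]; exact mul_pos (Real.rpow_pos_of_pos h0m p) (Real.rpow_pos_of_pos h0M p)
    have hnum_nonneg : 0 ≤ ‖Complex.exp (Complex.I * (x₁ * ξ.1)) - 1‖ ^ 2 *
        ‖Complex.exp (Complex.I * (x₂ * ξ.2)) - 1‖ ^ 2 := by positivity
    calc (‖Complex.exp (Complex.I * (x₁ * ξ.1)) - 1‖ ^ 2 *
          ‖Complex.exp (Complex.I * (x₂ * ξ.2)) - 1‖ ^ 2) / (m ^ a * M ^ b) ^ 2
        ≤ (‖Complex.exp (Complex.I * (x₁ * ξ.1)) - 1‖ ^ 2 *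
          ‖Complex.exp (Complex.I * (x₂ * ξ.2)) - 1‖ ^ 2) / (|ξ.1| ^ p * |ξ.2| ^ p) := by
          apply div_le_div_of_nonneg_left hnum_nonneg hDpos
          rw [← hmMprod]; exact hkey
      _ ≤ (min 4 (x₁ ^ 2 * ξ.1 ^ 2) * min 4 (x₂ ^ 2 * ξ.2 ^ 2)) /
            (|ξ.1| ^ p * |ξ.2| ^ p) := by
          refine (div_le_div_iff_of_pos_right hDpos).2 ?_
          have b1 : ‖Complex.exp (Complex.I * (x₁ * ξ.1)) - 1‖ ^ 2 ≤
                min 4 (x₁ ^ 2 * ξ.1 ^ 2) := by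
              have := norm_exp_I_mul_sub_one_sq (x₁ * ξ.1)
              rwa [Complex.ofReal_mul, mul_pow] at this
          have b2 : ‖Complex.exp (Complex.I * (x₂ * ξ.2)) - 1‖ ^ 2 ≤
                min 4 (x₂ ^ 2 * ξ.2 ^ 2) := by
              have := norm_exp_I_mul_sub_one_sq (x₂ * ξ.2)
              rwa [Complex.ofReal_mul, mul_pow] at this
          exact mul_le_mul b1 b2 (by positivity) (le_min (by norm_num) (by positivity))
      _ = g x₁ ξ.1 * g x₂ ξ.2 := by
          rw [hgdef]
          simp only
          rw [Real.rpow_neg (abs_nonneg ξ.1), Real.rpow_neg (abs_nonneg ξ.2)]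
          field_simp
  -- integrable bound
  have hB : Integrable (fun z : ℝ × ℝ => g x₁ z.1 * g x₂ z.2)
      (volume : Measure (ℝ × ℝ)) := by
    rw [MeasureTheory.Measure.volume_eq_prod]
    exact (g_integrable x₁ H hH0 hH1).mul_prod (g_integrable x₂ H hH0 hH1)
  rw [memLp_two_iff_integrable_sq_norm hmeas]
  refine hB.mono' ((hmeas.norm.aemeasurable.pow_const 2).aestronglyMeasurable) ?_
  refine ae_of_all _ fun ξ => ?_
  rw [Real.norm_eq_abs, abs_of_nonneg (by positivity)]
  exact hbound ξ
end

section
/- Let s ∈ (0,1), α ∈ [0,1], and let f : ℝ² → ℝ satisfy: there is c > 0 such that the rectangular increment Δf_{(h₁,h₂)}(x₁,x₂) = f(x₁+h₁,x₂+h₂) − f(x₁,x₂+h₂) − f(x₁+h₁,x₂) + f(x₁,x₂) satisfies |Δf_{(h₁,h₂)}(x₁,x₂)| ≤ c · min(|h₁|,|h₂|)^{(1+α)s} · max(|h₁|,|h₂|)^{(1−α)s} for all x₁,x₂,h₁,h₂. Let ψ : ℝ → ℝ be integrable with ∫ψ = 0 and with ∫ max(1,|y₁|,|y₂|)^{(1−α)s}·|y₁|^{(1+α)s}·|ψ(y₁)ψ(y₂)|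 dy₁dy₂ < ∞. Then for all integers j₁ ≥ j₂ ≥ 0 and k₁,k₂ ∈ ℤ, the coefficient c_{j₁,j₂,k₁,k₂} = 2^{j₁+j₂}∫_{ℝ²} f(x₁,x₂) ψ(2^{j₁}x₁−k₁)ψ(2^{j₂}x₂−k₂) dx satisfies |c_{j₁,j₂,k₁,k₂}| ≤ C · 2^{−(j₁(1+α)+j₂(1−α))s} for a constant C depending only on c, s, α, ψ. -/
open MeasureTheory Real
open scoped ENNReal NNReal

private lemma map_affine_volume {a : ℝ} (ha : 0 < a) (b : ℝ) :
    Measure.map (fun x : ℝ => a * x - b) volume = ENNReal.ofReal a⁻¹ • volume := by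
  have h1 : (fun x : ℝ => a * x - b) = (fun x : ℝ => x + -b) ∘ (fun x : ℝ => a * x) := by
    funext x; simp [sub_eq_add_neg]
  rw [h1, ← Measure.map_map (measurable_add_const (-b)) (measurable_const_mul a),
    Real.map_volume_mul_left ha.ne', Measure.map_smul, map_add_right_eq_self,
    abs_of_pos (inv_pos.mpr ha)]

private lemma integrable_comp_affine1 {g : ℝ → ℝ} (hg : Integrable g) {a : ℝ} (ha : 0 < a)
    (b : ℝ) :
    Integrable (fun x : ℝ => g (a * x - b)) ∧ ∫ x : ℝ, g (a * x - b) = a⁻¹ * ∫ y, g y := by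
  have hm : Measurable (fun x : ℝ => a * x - b) := (measurable_id.const_mul a).sub_const b
  have hmap := map_affine_volume ha b
  have hgsm : AEStronglyMeasurable g (Measure.map (fun x : ℝ => a * x - b) volume) := by
    rw [hmap]; exact hg.1.mono_ac Measure.smul_absolutelyContinuous
  constructor
  · refine (integrable_map_measure hgsm hm.aemeasurable).mp ?_
    rw [hmap]; exact hg.smul_measure ENNReal.ofReal_ne_top
  · rw [← integral_map hm.aemeasurable hgsm, hmap, integral_smul_measure,
      ENNReal.toReal_ofReal (by positivity), smul_eq_mul]

private lemma prod_smul_prod (cc d : ℝ≥0∞) (hcc : cc ≠ ⊤) (hd : d ≠ ⊤)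
    (μ ν : Measure ℝ) [SigmaFinite μ] [SigmaFinite ν] :
    (cc • μ).prod (d • ν) = (cc * d) • μ.prod ν := by
  lift cc to ℝ≥0 using hcc
  lift d to ℝ≥0 using hd
  have hrew : ∀ (e : ℝ≥0) (m : Measure ℝ), (e : ℝ≥0∞) • m = e • m := by
    intro e m; ext s hs; simp
  haveI : SigmaFinite ((cc : ℝ≥0∞) • μ) := by rw [hrew]; infer_instance
  haveI : SigmaFinite ((d : ℝ≥0∞) • ν) := by rw [hrew]; infer_instance
  refine (Measure.prod_eq fun s t hs ht => ?_)
  simp only [Measure.smul_apply, smul_eq_mul, Measure.prod_prod]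
  ring

private lemma map_affine2_volume {A B : ℝ} (hA : 0 < A) (hB : 0 < B) (b₁ b₂ : ℝ) :
    Measure.map (fun x : ℝ × ℝ => (A * x.1 - b₁, B * x.2 - b₂)) volume
      = ENNReal.ofReal ((A * B)⁻¹) • volume := by
  have hT : (fun x : ℝ × ℝ => (A * x.1 - b₁, B * x.2 - b₂))
      = Prod.map (fun x : ℝ => A * x - b₁) (fun x : ℝ => B * x - b₂) := by
    funext x; rfl
  rw [Measure.volume_eq_prod, hT,
    ← Measure.map_prod_map _ _ ((measurable_const_mul A).sub_const b₁)
      ((measurable_const_mul B).sub_const b₂),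
    map_affine_volume hA, map_affine_volume hB,
    prod_smul_prod _ _ ENNReal.ofReal_ne_top ENNReal.ofReal_ne_top,
    ← ENNReal.ofReal_mul (by positivity), ← mul_inv, ← Measure.volume_eq_prod]

private lemma integrable_comp_affine2 {G : ℝ × ℝ → ℝ} (hG : Integrable G)
    {A B : ℝ} (hA : 0 < A) (hB : 0 < B) (b₁ b₂ : ℝ) :
    Integrable (fun x : ℝ × ℝ => G (A * x.1 - b₁, B * x.2 - b₂)) ∧
      ∫ x : ℝ × ℝ, G (A * x.1 - b₁, B * x.2 - b₂) = (A * B)⁻¹ * ∫ y, G y := by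
  have hm : Measurable (fun x : ℝ × ℝ => (A * x.1 - b₁, B * x.2 - b₂)) :=
    ((measurable_fst.const_mul A).sub_const b₁).prodMk
      ((measurable_snd.const_mul B).sub_const b₂)
  have hmap := map_affine2_volume hA hB b₁ b₂
  have hGsm : AEStronglyMeasurable G
      (Measure.map (fun x : ℝ × ℝ => (A * x.1 - b₁, B * x.2 - b₂)) volume) := by
    rw [hmap]; exact hG.1.mono_ac Measure.smul_absolutelyContinuous
  constructor
  · refine (integrable_map_measure hGsm hm.aemeasurable).mp ?_
    rw [hmap]; exact hG.smul_measure ENNReal.ofReal_ne_top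
  · rw [← integral_map hm.aemeasurable hGsm, hmap, integral_smul_measure,
      ENNReal.toReal_ofReal (by positivity), smul_eq_mul]

theorem wavelet_coefficient_decay
    (s α : ℝ) (hs : s ∈ Set.Ioo (0:ℝ) 1) (hα : α ∈ Set.Icc (0:ℝ) 1)
    (f : ℝ × ℝ → ℝ) (hfm : Measurable f) (M : ℝ) (hfM : ∀ x, |f x| ≤ M)
    (c : ℝ) (hc : 0 < c)
    (hf : ∀ x₁ x₂ h₁ h₂ : ℝ,
      |f (x₁ + h₁, x₂ + h₂) - f (x₁, x₂ + h₂) - f (x₁ + h₁, x₂) + f (x₁, x₂)|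
        ≤ c * min |h₁| |h₂| ^ ((1 + α) * s) * max |h₁| |h₂| ^ ((1 - α) * s))
    (ψ : ℝ → ℝ) (hψint : Integrable ψ) (hψ0 : ∫ t, ψ t = 0)
    (hψmom : Integrable (fun y : ℝ × ℝ =>
      max 1 (max |y.1| |y.2|) ^ ((1 - α) * s) * |y.1| ^ ((1 + α) * s) * |ψ y.1 * ψ y.2|)) :
    ∃ C > 0, ∀ (j₁ j₂ : ℕ), j₂ ≤ j₁ → ∀ k₁ k₂ : ℤ,
      |(2:ℝ) ^ (j₁ + j₂) *
          ∫ x : ℝ × ℝ, f x * ψ (2 ^ j₁ * x.1 - k₁) * ψ (2 ^ j₂ * x.2 - k₂)|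
        ≤ C * (2:ℝ) ^ (-(((j₁:ℝ) * (1 + α) + (j₂:ℝ) * (1 - α)) * s)) := by
  obtain ⟨hs0, hs1⟩ := hs
  obtain ⟨hα0, hα1⟩ := hα
  set p := (1 + α) * s with hp_def
  set q := (1 - α) * s with hq_def
  have hp : 0 ≤ p := mul_nonneg (by linarith) hs0.le
  have hq : 0 ≤ q := mul_nonneg (by linarith) hs0.le
  set G : ℝ × ℝ → ℝ := fun y => max 1 (max |y.1| |y.2|) ^ q * |y.1| ^ p * |ψ y.1 * ψ y.2|
    with hG_def
  set K := ∫ y : ℝ × ℝ, G y with hK_def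
  have hK0 : 0 ≤ K := integral_nonneg fun y => by
    have h1 : (0:ℝ) ≤ max 1 (max |y.1| |y.2|) ^ q := rpow_nonneg (by positivity) _
    have h2 : (0:ℝ) ≤ |y.1| ^ p := rpow_nonneg (abs_nonneg _) _
    simp only [hG_def]
    positivity
  refine ⟨c * K + 1, by positivity, fun j₁ j₂ hj k₁ k₂ => ?_⟩
  set A : ℝ := 2 ^ j₁ with hA_def
  set B : ℝ := 2 ^ j₂ with hB_def
  have hA : 0 < A := by positivity
  have hB : 0 < B := by positivity
  have hBA : B ≤ A := by
    rw [hA_def, hB_def]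
    exact pow_le_pow_right₀ (by norm_num) hj
  set a₁ : ℝ := (k₁ : ℝ) / A with ha₁_def
  set a₂ : ℝ := (k₂ : ℝ) / B with ha₂_def
  obtain ⟨hIψ₁, hiψ₁⟩ := integrable_comp_affine1 hψint hA (k₁ : ℝ)
  obtain ⟨hIψ₂, hiψ₂⟩ := integrable_comp_affine1 hψint hB (k₂ : ℝ)
  have hψ₁0 : ∫ x : ℝ, ψ (A * x - (k₁ : ℝ)) = 0 := by rw [hiψ₁, hψ0, mul_zero]
  have hψ₂0 : ∫ x : ℝ, ψ (B * x - (k₂ : ℝ)) = 0 := by rw [hiψ₂, hψ0, mul_zero]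
  obtain ⟨hIGT, hiGT⟩ := integrable_comp_affine2 hψmom hA hB (k₁ : ℝ) (k₂ : ℝ)
  set Δ : ℝ × ℝ → ℝ := fun x => f x - f (a₁, x.2) - f (x.1, a₂) + f (a₁, a₂) with hΔ_def
  set P : ℝ × ℝ → ℝ := fun x => ψ (A * x.1 - (k₁ : ℝ)) * ψ (B * x.2 - (k₂ : ℝ)) with hP_def
  have hprod_int : Integrable P := by
    rw [hP_def, Measure.volume_eq_prod]
    exact hIψ₁.mul_prod hIψ₂
  have hbdd : ∀ g : ℝ × ℝ → ℝ, AEStronglyMeasurable g (volume : Measure (ℝ × ℝ)) →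
      (∀ x, |g x| ≤ |M|) → Integrable (fun x : ℝ × ℝ => g x * P x) :=
    fun g hgm hgb => hprod_int.bdd_mul hgm (Filter.Eventually.of_forall fun x => by
      rw [Real.norm_eq_abs]; exact hgb x)
  have hMabs : ∀ x, |f x| ≤ |M| := fun x => (hfM x).trans (le_abs_self M)
  have h₁ : Integrable (fun x : ℝ × ℝ => f x * P x) :=
    hbdd f hfm.aestronglyMeasurable (fun x => hMabs x)
  have h₂ : Integrable (fun x : ℝ × ℝ => f (a₁, x.2) * P x) :=
    hbdd _ ((hfm.comp (measurable_const.prodMk measurable_snd)).aestronglyMeasurable)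
      (fun x => hMabs _)
  have h₃ : Integrable (fun x : ℝ × ℝ => f (x.1, a₂) * P x) :=
    hbdd _ ((hfm.comp (measurable_fst.prodMk measurable_const)).aestronglyMeasurable)
      (fun x => hMabs _)
  have h₄ : Integrable (fun x : ℝ × ℝ => f (a₁, a₂) * P x) :=
    hbdd _ aestronglyMeasurable_const (fun x => hMabs _)
  have z₁ : ∫ x : ℝ × ℝ, f (a₁, x.2) * P x = 0 := by
    have e : (fun x : ℝ × ℝ => f (a₁, x.2) * P x)
        = fun x : ℝ × ℝ => (fun t => ψ (A * t - (k₁ : ℝ))) x.1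
            * (fun t => f (a₁, t) * ψ (B * t - (k₂ : ℝ))) x.2 := by
      funext x; simp only [hP_def]; ring
    rw [e]
    exact (integral_prod_mul (μ := (volume : Measure ℝ)) (ν := (volume : Measure ℝ))
      (fun t : ℝ => ψ (A * t - (k₁ : ℝ)))
      (fun t : ℝ => f (a₁, t) * ψ (B * t - (k₂ : ℝ)))).trans (by rw [hψ₁0, zero_mul])
  have z₂ : ∫ x : ℝ × ℝ, f (x.1, a₂) * P x = 0 := by
    have e : (fun x : ℝ × ℝ => f (x.1, a₂) * P x)
        = fun x : ℝ × ℝ => (fun t => f (t, a₂) * ψ (A * t - (k₁ : ℝ))) x.1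
            * (fun t => ψ (B * t - (k₂ : ℝ))) x.2 := by
      funext x; simp only [hP_def]; ring
    rw [e]
    exact (integral_prod_mul (μ := (volume : Measure ℝ)) (ν := (volume : Measure ℝ))
      (fun t : ℝ => f (t, a₂) * ψ (A * t - (k₁ : ℝ)))
      (fun t : ℝ => ψ (B * t - (k₂ : ℝ)))).trans (by rw [hψ₂0, mul_zero])
  have z₃ : ∫ x : ℝ × ℝ, f (a₁, a₂) * P x = 0 := by
    have e : (fun x : ℝ × ℝ => f (a₁, a₂) * P x)
        = fun x : ℝ × ℝ => (fun t => f (a₁, a₂) * ψ (A * t - (k₁ : ℝ))) x.1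
            * (fun t => ψ (B * t - (k₂ : ℝ))) x.2 := by
      funext x; simp only [hP_def]; ring
    rw [e]
    exact (integral_prod_mul (μ := (volume : Measure ℝ)) (ν := (volume : Measure ℝ))
      (fun t : ℝ => f (a₁, a₂) * ψ (A * t - (k₁ : ℝ)))
      (fun t : ℝ => ψ (B * t - (k₂ : ℝ)))).trans (by rw [hψ₂0, mul_zero])
  have key : ∫ x : ℝ × ℝ, f x * ψ (A * x.1 - (k₁ : ℝ)) * ψ (B * x.2 - (k₂ : ℝ))
      = ∫ x : ℝ × ℝ, Δ x * P x := by
    have e0 : (fun x : ℝ × ℝ => f x * ψ (A * x.1 - (k₁ : ℝ)) * ψ (B * x.2 - (k₂ : ℝ)))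
        = fun x : ℝ × ℝ => f x * P x := by
      funext x; simp only [hP_def]; ring
    have e1 : (fun x : ℝ × ℝ => Δ x * P x)
        = fun x : ℝ × ℝ => f x * P x - f (a₁, x.2) * P x - f (x.1, a₂) * P x
            + f (a₁, a₂) * P x := by
      funext x; simp only [hΔ_def]; ring
    have h5 : ∫ x : ℝ × ℝ, (f x * P x - f (a₁, x.2) * P x - f (x.1, a₂) * P x
          + f (a₁, a₂) * P x)
        = (∫ x : ℝ × ℝ, (f x * P x - f (a₁, x.2) * P x - f (x.1, a₂) * P x))
          + ∫ x : ℝ × ℝ, f (a₁, a₂) * P x := integral_add ((h₁.sub h₂).sub h₃) h₄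
    have h6 : ∫ x : ℝ × ℝ, (f x * P x - f (a₁, x.2) * P x - f (x.1, a₂) * P x)
        = (∫ x : ℝ × ℝ, (f x * P x - f (a₁, x.2) * P x))
          - ∫ x : ℝ × ℝ, f (x.1, a₂) * P x := integral_sub (h₁.sub h₂) h₃
    have h7 : ∫ x : ℝ × ℝ, (f x * P x - f (a₁, x.2) * P x)
        = (∫ x : ℝ × ℝ, f x * P x) - ∫ x : ℝ × ℝ, f (a₁, x.2) * P x := integral_sub h₁ h₂
    rw [e0, e1]
    linarith [h5, h6, h7, z₁, z₂, z₃]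
  have hdom : ∀ x : ℝ × ℝ, ‖Δ x * P x‖
      ≤ (c * (A ^ p)⁻¹ * (B ^ q)⁻¹) * G (A * x.1 - (k₁ : ℝ), B * x.2 - (k₂ : ℝ)) := by
    intro x
    set y₁ : ℝ := A * x.1 - (k₁ : ℝ) with hy₁
    set y₂ : ℝ := B * x.2 - (k₂ : ℝ) with hy₂
    have hx1 : a₁ + y₁ / A = x.1 := by
      rw [ha₁_def, hy₁]; field_simp; ring
    have hx2 : a₂ + y₂ / B = x.2 := by
      rw [ha₂_def, hy₂]; field_simp; ring
    have hΔb : |Δ x| ≤ c * min |y₁ / A| |y₂ / B| ^ p * max |y₁ / A| |y₂ / B| ^ q := by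
      have h := hf a₁ a₂ (y₁ / A) (y₂ / B)
      rw [hx1, hx2] at h
      simpa only [hΔ_def, Prod.mk.eta] using h
    have habs1 : |y₁ / A| = |y₁| / A := by rw [abs_div, abs_of_pos hA]
    have habs2 : |y₂ / B| = |y₂| / B := by rw [abs_div, abs_of_pos hB]
    rw [habs1, habs2] at hΔb
    set m1 : ℝ := max 1 (max |y₁| |y₂|) with hm1
    have hm1pos : (0:ℝ) < m1 := lt_of_lt_of_le one_pos (le_max_left _ _)
    have hmin : min (|y₁| / A) (|y₂| / B) ^ p ≤ (|y₁| / A) ^ p :=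
      rpow_le_rpow (le_min (by positivity) (by positivity)) (min_le_left _ _) hp
    have hmax : max (|y₁| / A) (|y₂| / B) ^ q ≤ (m1 / B) ^ q := by
      refine rpow_le_rpow (le_trans (by positivity) (le_max_left _ _)) (max_le ?_ ?_) hq
      · exact div_le_div₀ (by positivity)
          (le_trans (le_max_left |y₁| |y₂|) (le_max_right 1 _)) hB hBA
      · exact div_le_div₀ (by positivity)
          (le_trans (le_max_right |y₁| |y₂|) (le_max_right 1 _)) hB le_rfl
    have hfinal : |Δ x| ≤ c * (A ^ p)⁻¹ * (B ^ q)⁻¹ * (m1 ^ q * |y₁| ^ p) := by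
      calc |Δ x| ≤ c * min (|y₁| / A) (|y₂| / B) ^ p * max (|y₁| / A) (|y₂| / B) ^ q := hΔb
        _ ≤ c * (|y₁| / A) ^ p * (m1 / B) ^ q := by
            refine mul_le_mul (mul_le_mul_of_nonneg_left hmin hc.le) hmax
              (rpow_nonneg (le_trans (by positivity) (le_max_left _ _)) _) (by positivity)
        _ = c * (A ^ p)⁻¹ * (B ^ q)⁻¹ * (m1 ^ q * |y₁| ^ p) := by
            rw [div_rpow (abs_nonneg _) hA.le, div_rpow hm1pos.le hB.le,
              div_eq_mul_inv, div_eq_mul_inv]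
            ring
    have hGval : G (y₁, y₂) = m1 ^ q * |y₁| ^ p * |ψ y₁ * ψ y₂| := by
      simp only [hG_def, hm1]
    have hPx : |P x| = |ψ y₁ * ψ y₂| := by
      simp only [hP_def, hy₁, hy₂]
    calc ‖Δ x * P x‖ = |Δ x| * |ψ y₁ * ψ y₂| := by
          rw [Real.norm_eq_abs, abs_mul, hPx]
      _ ≤ c * (A ^ p)⁻¹ * (B ^ q)⁻¹ * (m1 ^ q * |y₁| ^ p) * |ψ y₁ * ψ y₂| :=
          mul_le_mul_of_nonneg_right hfinal (abs_nonneg _)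
      _ = (c * (A ^ p)⁻¹ * (B ^ q)⁻¹) * G (y₁, y₂) := by
          rw [hGval]; ring
  have hnorm : ‖∫ x : ℝ × ℝ, Δ x * P x‖ ≤ c * (A ^ p)⁻¹ * (B ^ q)⁻¹ * ((A * B)⁻¹ * K) := by
    calc ‖∫ x : ℝ × ℝ, Δ x * P x‖
        ≤ ∫ x : ℝ × ℝ, (c * (A ^ p)⁻¹ * (B ^ q)⁻¹)
            * G (A * x.1 - (k₁ : ℝ), B * x.2 - (k₂ : ℝ)) :=
          norm_integral_le_of_norm_le (hIGT.const_mul _) (Filter.Eventually.of_forall hdom)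
      _ = (c * (A ^ p)⁻¹ * (B ^ q)⁻¹)
            * ∫ x : ℝ × ℝ, G (A * x.1 - (k₁ : ℝ), B * x.2 - (k₂ : ℝ)) :=
          integral_const_mul _ _
      _ = c * (A ^ p)⁻¹ * (B ^ q)⁻¹ * ((A * B)⁻¹ * K) := by rw [hiGT, ← hK_def]
  have hABpow : (2:ℝ) ^ (j₁ + j₂) = A * B := by rw [hA_def, hB_def, pow_add]
  have hexp : (A ^ p)⁻¹ * (B ^ q)⁻¹
      = (2:ℝ) ^ (-(((j₁:ℝ) * (1 + α) + (j₂:ℝ) * (1 - α)) * s)) := by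
    rw [hA_def, hB_def, ← Real.rpow_natCast 2 j₁, ← Real.rpow_natCast 2 j₂,
      ← Real.rpow_mul (by norm_num : (0:ℝ) ≤ 2), ← Real.rpow_mul (by norm_num : (0:ℝ) ≤ 2),
      ← Real.rpow_neg (by norm_num : (0:ℝ) ≤ 2), ← Real.rpow_neg (by norm_num : (0:ℝ) ≤ 2),
      ← Real.rpow_add (by norm_num : (0:ℝ) < 2)]
    congr 1
    rw [hp_def, hq_def]; ring
  rw [key, hABpow, abs_mul, abs_of_pos (by positivity : (0:ℝ) < A * B), ← Real.norm_eq_abs]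
  calc A * B * ‖∫ x : ℝ × ℝ, Δ x * P x‖
      ≤ A * B * (c * (A ^ p)⁻¹ * (B ^ q)⁻¹ * ((A * B)⁻¹ * K)) :=
        mul_le_mul_of_nonneg_left hnorm (by positivity)
    _ = c * K * ((A ^ p)⁻¹ * (B ^ q)⁻¹) := by
        rw [show A * B * (c * (A ^ p)⁻¹ * (B ^ q)⁻¹ * ((A * B)⁻¹ * K))
            = (A * B) * (A * B)⁻¹ * (c * K * ((A ^ p)⁻¹ * (B ^ q)⁻¹)) from by ring,
          mul_inv_cancel₀ (by positivity : (A * B) ≠ 0), one_mul]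
    _ = c * K * (2:ℝ) ^ (-(((j₁:ℝ) * (1 + α) + (j₂:ℝ) * (1 - α)) * s)) := by rw [hexp]
    _ ≤ (c * K + 1) * (2:ℝ) ^ (-(((j₁:ℝ) * (1 + α) + (j₂:ℝ) * (1 - α)) * s)) :=
        mul_le_mul_of_nonneg_right (by linarith) (rpow_nonneg (by norm_num) _)
end
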